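/- arXiv:1301.0140 — 2 statements merged into one kernel-verified Lean document; each statement's English description precedes it below -/
import Mathlib

section
/- Let ⊙ be a pseudo-multiplication on [0,∞] and let ν, τ be σ-maxitive measures on a measurable space (E, 𝔅). Assume that ν is semi-⊙-finite and that there exists a measurable c : E → [0,∞] with ν(B) = ∫_B c ⊙ dτ for all measurable B. Then there exists a measurable c₁ : E → [0,∞] taking only ⊙-finite values such that ν(B) = ∫_B c₁ ⊙ dτ for all measurable B. -/
open scoped ENNReal
open Set

/-- A pseudo-multiplication on `[0,∞]`: associative, monotone in each argument,
continuous on `(0,∞) × [0,∞]`, with `s ↦ s ⊙ t` continuous on `(0,∞]`,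
admitting a left identity, without zero divisors, and with `0` as annihilator. -/
structure PseudoMul where
  op : ℝ≥0∞ → ℝ≥0∞ → ℝ≥0∞
  assoc : ∀ a b c, op (op a b) c = op a (op b c)
  mono_left : ∀ t, Monotone fun s => op s t
  mono_right : ∀ s, Monotone fun t => op s t
  continuousOn : ContinuousOn (fun p : ℝ≥0∞ × ℝ≥0∞ => op p.1 p.2) (Ioo 0 ⊤ ×ˢ univ)
  continuousOn_left : ∀ t, ContinuousOn (fun s => op s t) (Ioi 0)
  one : ℝ≥0∞
  one_op : ∀ t, op one t = t
  no_zero_divisors : ∀ s t, op s t = 0 → s = 0 ∨ t = 0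
  zero_op : ∀ t, op 0 t = 0
  op_zero : ∀ t, op t 0 = 0

/-- An element `t` is `⊙`-finite if `⨅_{s>0} s ⊙ t = 0`. -/
def PseudoMul.OFinite (P : PseudoMul) (t : ℝ≥0∞) : Prop :=
  ⨅ s ∈ Ioi (0 : ℝ≥0∞), P.op s t = 0

/-- `⊙` is non-degenerate if its left identity is `⊙`-finite. -/
def PseudoMul.Nondegenerate (P : PseudoMul) : Prop :=
  P.OFinite P.one

/-- A σ-maxitive measure: vanishes on `∅` and turns countable unions of
measurable sets into suprema. -/
def SigmaMaxitive {E : Type*} [MeasurableSpace E] (ν : Set E → ℝ≥0∞) : Prop :=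
  ν ∅ = 0 ∧ ∀ B : ℕ → Set E, (∀ n, MeasurableSet (B n)) →
    ν (⋃ n, B n) = ⨆ n, ν (B n)

/-- The idempotent `⊙`-integral `∫_B f ⊙ dν = ⨆_{t ∈ [0,∞)} t ⊙ ν(B ∩ {f > t})`. -/
noncomputable def idemInt {E : Type*} [MeasurableSpace E] (P : PseudoMul) (ν : Set E → ℝ≥0∞)
    (f : E → ℝ≥0∞) (B : Set E) : ℝ≥0∞ :=
  ⨆ t ∈ Iio (⊤ : ℝ≥0∞), P.op t (ν (B ∩ {x | t < f x}))

/-- `ν` is semi-`⊙`-finite if `ν(B)` is the supremum of `ν(A)` over measurable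
`A ⊆ B` with `ν(A)` `⊙`-finite, for every measurable `B`. -/
def SemiOFinite {E : Type*} [MeasurableSpace E] (P : PseudoMul)
    (ν : Set E → ℝ≥0∞) : Prop :=
  ∀ B : Set E, MeasurableSet B →
    ν B = ⨆ A ∈ {A : Set E | MeasurableSet A ∧ A ⊆ B ∧ P.OFinite (ν A)}, ν A

open Filter Topology

noncomputable def hAux (P : PseudoMul) (t : ℝ≥0∞) : ℝ≥0∞ :=
  ⨅ s ∈ Ioi (0 : ℝ≥0∞), P.op s t

lemma hAux_eq (P : PseudoMul) (t : ℝ≥0∞) :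
    hAux P t = ⨅ n : ℕ, P.op ((n : ℝ≥0∞))⁻¹ t := by
  apply le_antisymm
  · exact le_iInf fun n => biInf_le (f := fun s => P.op s t)
      (by simp : ((n : ℝ≥0∞))⁻¹ ∈ Ioi 0)
  · refine le_iInf₂ fun s hs => ?_
    obtain ⟨n, hn⟩ := ENNReal.exists_inv_nat_lt (a := s) (ne_of_gt hs)
    exact le_trans (iInf_le _ n) (P.mono_left t hn.le)

lemma hAux_measurable (P : PseudoMul) : Measurable (hAux P) := by
  have : hAux P = fun t => ⨅ n : ℕ, P.op ((n : ℝ≥0∞))⁻¹ t := funext (hAux_eq P)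
  rw [this]
  exact Measurable.iInf fun n => (P.mono_right _).measurable

lemma hAux_zero (P : PseudoMul) : hAux P 0 = 0 :=
  le_antisymm (le_trans (biInf_le (f := fun s => P.op s 0)
    (by simp : (1:ℝ≥0∞) ∈ Ioi 0)) (by simp [P.op_zero])) zero_le

lemma hAux_le (P : PseudoMul) {s : ℝ≥0∞} (hs : 0 < s) (t : ℝ≥0∞) :
    hAux P t ≤ P.op s t :=
  biInf_le (f := fun s => P.op s t) hs

lemma SigmaMaxitive.mono {E : Type*} [MeasurableSpace E] {ν : Set E → ℝ≥0∞}
    (hν : SigmaMaxitive ν) {A B : Set E} (hA : MeasurableSet A) (hB : MeasurableSet B)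
    (hAB : A ⊆ B) : ν A ≤ ν B := by
  have h := hν.2 (fun n => if n = 0 then A else B)
    (fun n => by by_cases h : n = 0 <;> simp [h, hA, hB])
  have hU : (⋃ n, if n = 0 then A else B) = B := by
    apply subset_antisymm
    · exact iUnion_subset fun n => by by_cases h : n = 0 <;> simp [h, hAB]
    · exact subset_iUnion_of_subset 1 (by simp)
  rw [hU] at h
  calc ν A = (fun n => ν (if n = 0 then A else B)) 0 := by simp
    _ ≤ ⨆ n, ν (if n = 0 then A else B) := le_iSup (fun n => ν (if n = 0 then A else B)) 0
    _ = ν B := h.symm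

lemma SigmaMaxitive.union {E : Type*} [MeasurableSpace E] {ν : Set E → ℝ≥0∞}
    (hν : SigmaMaxitive ν) {A B : Set E} (hA : MeasurableSet A) (hB : MeasurableSet B) :
    ν (A ∪ B) = ν A ⊔ ν B := by
  have h := hν.2 (fun n => if n = 0 then A else B)
    (fun n => by by_cases h : n = 0 <;> simp [h, hA, hB])
  have hU : (⋃ n, if n = 0 then A else B) = A ∪ B := by
    apply subset_antisymm
    · exact iUnion_subset fun n => by
        by_cases h : n = 0 <;> simp [h, subset_union_left, subset_union_right]
    · exact union_subset (subset_iUnion_of_subset 0 (by simp))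
        (subset_iUnion_of_subset 1 (by simp))
  rw [hU] at h
  rw [h]
  apply le_antisymm
  · exact iSup_le fun n => by by_cases h : n = 0 <;> simp [h, le_sup_left, le_sup_right]
  · refine sup_le ?_ ?_
    · calc ν A = (fun n => ν (if n = 0 then A else B)) 0 := by simp
        _ ≤ _ := le_iSup (fun n => ν (if n = 0 then A else B)) 0
    · calc ν B = (fun n => ν (if n = 0 then A else B)) 1 := by simp
        _ ≤ _ := le_iSup (fun n => ν (if n = 0 then A else B)) 1

lemma PseudoMul.left_cont_le (P : PseudoMul) {s : ℝ≥0∞} (hs0 : 0 < s) (hstop : s ≠ ⊤)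
    {u : ℝ≥0∞} (hu : 0 < u) {b : ℝ≥0∞} (hb : ∀ t < u, P.op s t ≤ b) : P.op s u ≤ b := by
  obtain ⟨w, _, hw, hwt⟩ := exists_seq_strictMono_tendsto' hu
  have hcont : ContinuousAt (fun t => P.op s t) u := by
    have h1 : ContinuousWithinAt (fun p : ℝ≥0∞ × ℝ≥0∞ => P.op p.1 p.2)
        (Ioo 0 ⊤ ×ˢ univ) (s, u) :=
      P.continuousOn (s, u) (by simp [hs0, lt_top_iff_ne_top.2 hstop])
    have h2 : ContinuousAt (fun t : ℝ≥0∞ => ((s, t) : ℝ≥0∞ × ℝ≥0∞)) u :=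
      (continuous_const.prodMk continuous_id).continuousAt
    have := h1.comp (h2.continuousWithinAt (s := univ))
      (fun t _ => by simp [hs0, lt_top_iff_ne_top.2 hstop])
    simpa [continuousWithinAt_univ, Function.comp_def] using this
  refine le_of_tendsto (hcont.tendsto.comp hwt) (Eventually.of_forall fun n => hb _ (hw n).2)

/-- A semi-`⊙`-finite σ-maxitive measure with a density admits a
`⊙`-finite-valued density. -/
theorem exists_ofinite_valued_density {E : Type*} [MeasurableSpace E]
    (P : PseudoMul) (ν τ : Set E → ℝ≥0∞)
    (hν : SigmaMaxitive ν) (hτ : SigmaMaxitive τ) (hsemi : SemiOFinite P ν)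
    (c : E → ℝ≥0∞) (hc : Measurable c)
    (hdens : ∀ B : Set E, MeasurableSet B → ν B = idemInt P τ c B) :
    ∃ c₁ : E → ℝ≥0∞, Measurable c₁ ∧ (∀ x, P.OFinite (c₁ x)) ∧
      ∀ B : Set E, MeasurableSet B → ν B = idemInt P τ c₁ B := by
  classical
  have hhc : Measurable fun x => hAux P (c x) := (hAux_measurable P).comp hc
  set N : Set E := {x | hAux P (c x) ≠ 0} with hNdef
  have hNmeas : MeasurableSet N := by
    have h0 : MeasurableSet {x | hAux P (c x) = 0} :=
      hhc (measurableSet_singleton 0)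
    have : N = {x | hAux P (c x) = 0}ᶜ := by ext x; simp [hNdef]
    rw [this]; exact h0.compl
  have hlevel : ∀ t : ℝ≥0∞, MeasurableSet {x | t < c x} := fun t =>
    measurableSet_lt measurable_const hc
  -- Key claim: if ν A is ⊙-finite then τ (A ∩ N) = 0
  have key : ∀ A : Set E, MeasurableSet A → P.OFinite (ν A) → τ (A ∩ N) = 0 := by
    intro A hA hfin
    by_contra hpos
    -- find a level set with positive τ-measure
    have hBmmeas : ∀ m : ℕ, MeasurableSet (A ∩ {x | ((m : ℝ≥0∞))⁻¹ < hAux P (c x)}) :=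
      fun m => hA.inter (measurableSet_lt measurable_const hhc)
    have hUn : (⋃ m : ℕ, A ∩ {x | ((m : ℝ≥0∞))⁻¹ < hAux P (c x)}) = A ∩ N := by
      ext x
      simp only [mem_iUnion, mem_inter_iff, mem_setOf_eq, hNdef]
      constructor
      · rintro ⟨m, hxA, hm⟩
        refine ⟨hxA, fun h0 => ?_⟩
        rw [h0] at hm
        exact (ENNReal.not_lt_zero hm)
      · rintro ⟨hxA, hx0⟩
        obtain ⟨m, hm⟩ := ENNReal.exists_inv_nat_lt hx0
        exact ⟨m, hxA, hm⟩
    have hτsup := hτ.2 _ hBmmeas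
    rw [hUn] at hτsup
    have hex : ∃ m : ℕ, τ (A ∩ {x | ((m : ℝ≥0∞))⁻¹ < hAux P (c x)}) ≠ 0 := by
      by_contra hcon
      push_neg at hcon
      exact hpos (by rw [hτsup]; simp [hcon])
    obtain ⟨m, hm⟩ := hex
    set ε : ℝ≥0∞ := ((m : ℝ≥0∞))⁻¹ with hεdef
    set S : Set E := A ∩ {x | ε < hAux P (c x)} with hSdef
    have hSmeas : MeasurableSet S := hBmmeas m
    have hSsub : S ⊆ A := inter_subset_left
    have hε0 : 0 < ε := by simp [hεdef]
    have hεtop : ε ≠ ⊤ := by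
      intro htop
      apply hm
      have hempty : S = ∅ := by
        ext x
        simp only [hSdef, mem_inter_iff, mem_setOf_eq, mem_empty_iff_false, iff_false, not_and]
        intro _
        rw [htop]
        exact not_top_lt
      show τ S = 0
      rw [hempty, hτ.1]
    have hγ0 : τ S ≠ 0 := hm
    set γ' : ℝ≥0∞ := if τ S = ⊤ then 1 else τ S / 2 with hγ'def
    have hγ'0 : 0 < γ' := by
      by_cases hg : τ S = ⊤
      · simp [hγ'def, hg]
      · simp only [hγ'def, if_neg hg]
        exact ENNReal.half_pos hγ0
    have hγ'lt : γ' < τ S := by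
      by_cases hg : τ S = ⊤
      · simp [hγ'def, hg]
      · simp only [hγ'def, if_neg hg]
        exact ENNReal.half_lt_self hγ0 hg
    have hK0 : P.op (ε / 2) γ' ≠ 0 := by
      intro h
      rcases P.no_zero_divisors _ _ h with h | h
      · exact (ne_of_gt (ENNReal.half_pos (ne_of_gt hε0))) h
      · exact (ne_of_gt hγ'0) h
    -- main bound
    have main : ∀ s : ℝ≥0∞, 0 < s → s ≠ ⊤ → P.op (ε / 2) γ' ≤ P.op s (ν A) := by
      intro s hs0 hstop
      set r : ℕ → ℝ≥0∞ :=
        fun n => (Real.toNNReal (((Denumerable.eqv ℚ).symm n : ℚ) : ℝ) : ℝ≥0∞) with hrdef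
      set C : ℕ → Set E :=
        fun n => if ε / 2 < P.op s (r n) then S ∩ {x | r n < c x} else ∅ with hCdef
      have hCmeas : ∀ n, MeasurableSet (C n) := by
        intro n
        by_cases h : ε / 2 < P.op s (r n)
        · simp only [hCdef, if_pos h]
          exact hSmeas.inter (hlevel _)
        · simp only [hCdef, if_neg h]
          exact MeasurableSet.empty
      have hCsub : ∀ n, C n ⊆ S := by
        intro n
        by_cases h : ε / 2 < P.op s (r n)
        · simp only [hCdef, if_pos h]; exact inter_subset_left
        · simp only [hCdef, if_neg h]; exact empty_subset _
      have hcover : S ⊆ ⋃ n, C n := by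
        intro x hx
        have hxh : ε < hAux P (c x) := hx.2
        have hcx0 : 0 < c x := by
          rcases eq_or_lt_of_le (zero_le : 0 ≤ c x) with h0 | h0
          · rw [← h0, hAux_zero] at hxh
            exact absurd hxh ENNReal.not_lt_zero
          · exact h0
        have hsc : ε < P.op s (c x) := lt_of_lt_of_le hxh (hAux_le P hs0 _)
        have hex : ∃ t, t < c x ∧ ε / 2 < P.op s t := by
          by_contra hcon
          push_neg at hcon
          have hle : P.op s (c x) ≤ ε / 2 :=
            P.left_cont_le hs0 hstop hcx0 (fun t ht => hcon t ht)
          exact absurd (lt_of_le_of_lt hle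
            (ENNReal.half_lt_self (ne_of_gt hε0) hεtop)) (not_lt.2 hsc.le)
        obtain ⟨t, htlt, hst⟩ := hex
        obtain ⟨q, _, htq, hqc⟩ := ENNReal.lt_iff_exists_rat_btwn.1 htlt
        refine mem_iUnion.2 ⟨(Denumerable.eqv ℚ) q, ?_⟩
        have hrn : r ((Denumerable.eqv ℚ) q) = (Real.toNNReal (q : ℝ) : ℝ≥0∞) := by
          simp only [hrdef, Equiv.symm_apply_apply]
        have hcond : ε / 2 < P.op s (r ((Denumerable.eqv ℚ) q)) := by
          rw [hrn]
          exact lt_of_lt_of_le hst (P.mono_right s htq.le)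
        simp only [hCdef, if_pos hcond]
        refine ⟨hx, ?_⟩
        show r ((Denumerable.eqv ℚ) q) < c x
        rw [hrn]
        exact hqc
      have hUC : (⋃ n, C n) = S := subset_antisymm (iUnion_subset hCsub) hcover
      have hsupC : τ S = ⨆ n, τ (C n) := by rw [← hUC]; exact hτ.2 C hCmeas
      have hexn : ∃ n, γ' < τ (C n) := by
        rw [← lt_iSup_iff, ← hsupC]; exact hγ'lt
      obtain ⟨n, hn⟩ := hexn
      have hcond : ε / 2 < P.op s (r n) := by
        by_contra hcon
        have hCn : C n = ∅ := by simp only [hCdef, if_neg hcon]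
        rw [hCn, hτ.1] at hn
        exact absurd hn (not_lt.2 zero_le)
      have hCn : C n = S ∩ {x | r n < c x} := by simp only [hCdef, if_pos hcond]
      have hrtop : r n ∈ Iio (⊤ : ℝ≥0∞) := by
        simp only [hrdef, mem_Iio]
        exact ENNReal.coe_lt_top
      have h1 : P.op (r n) (τ (A ∩ {x | r n < c x})) ≤ ν A := by
        rw [hdens A hA]
        exact le_iSup₂ (f := fun t (_ : t ∈ Iio (⊤ : ℝ≥0∞)) =>
          P.op t (τ (A ∩ {x | t < c x}))) (r n) hrtop
      have h2 : γ' ≤ τ (A ∩ {x | r n < c x}) := by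
        refine le_trans hn.le (hτ.mono (hCmeas n) (hA.inter (hlevel _)) ?_)
        rw [hCn]
        exact inter_subset_inter hSsub (fun x hx => hx)
      calc P.op (ε / 2) γ'
          ≤ P.op (P.op s (r n)) γ' := P.mono_left γ' hcond.le
        _ ≤ P.op (P.op s (r n)) (τ (A ∩ {x | r n < c x})) := P.mono_right _ h2
        _ = P.op s (P.op (r n) (τ (A ∩ {x | r n < c x}))) := P.assoc _ _ _
        _ ≤ P.op s (ν A) := P.mono_right s h1
    have hKle : P.op (ε / 2) γ' ≤ ⨅ s ∈ Ioi (0 : ℝ≥0∞), P.op s (ν A) := by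
      refine le_iInf₂ fun s hs => ?_
      by_cases hstop : s = ⊤
      · subst hstop
        exact le_trans (main 1 one_pos ENNReal.one_ne_top) (P.mono_left (ν A) le_top)
      · exact main s hs hstop
    rw [hfin] at hKle
    exact hK0 (le_antisymm hKle zero_le)
  -- the new density
  refine ⟨fun x => if hAux P (c x) = 0 then c x else 0, ?_, ?_, ?_⟩
  · refine Measurable.ite ?_ hc measurable_const
    exact hhc (measurableSet_singleton 0)
  · intro x
    by_cases hx : hAux P (c x) = 0
    · simp only [if_pos hx]
      exact hx
    · simp only [if_neg hx]
      exact hAux_zero P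
  · intro B hB
    have hBN : MeasurableSet (B ∩ Nᶜ) := hB.inter hNmeas.compl
    have hstep : ν B = ν (B ∩ Nᶜ) := by
      apply le_antisymm
      · rw [hsemi B hB]
        refine iSup₂_le fun A hAmem => ?_
        obtain ⟨hAm, hAB, hAfin⟩ := hAmem
        have hτAN : τ (A ∩ N) = 0 := key A hAm hAfin
        have hAint : ν A = ν (A ∩ Nᶜ) := by
          rw [hdens A hAm, hdens _ (hAm.inter hNmeas.compl)]
          unfold idemInt
          refine iSup_congr fun t => iSup_congr fun ht => ?_
          congr 1
          have hsplit : A ∩ {x | t < c x} =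
              ((A ∩ Nᶜ) ∩ {x | t < c x}) ∪ ((A ∩ N) ∩ {x | t < c x}) := by
            ext x
            by_cases hx : x ∈ N <;>
              simp [hx, mem_inter_iff, and_assoc, and_comm, and_left_comm]
          rw [hsplit, hτ.union ((hAm.inter hNmeas.compl).inter (hlevel t))
            ((hAm.inter hNmeas).inter (hlevel t))]
          have hz : τ ((A ∩ N) ∩ {x | t < c x}) = 0 := by
            refine le_antisymm ?_ zero_le
            rw [← hτAN]
            exact hτ.mono ((hAm.inter hNmeas).inter (hlevel t)) (hAm.inter hNmeas)
              inter_subset_left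
          rw [hz, sup_eq_left.2 zero_le]
        rw [hAint]
        exact hν.mono (hAm.inter hNmeas.compl) hBN
          (inter_subset_inter hAB (fun x hx => hx))
      · exact hν.mono hBN hB inter_subset_left
    rw [hstep, hdens _ hBN]
    unfold idemInt
    refine iSup_congr fun t => iSup_congr fun ht => ?_
    have hseteq : (B ∩ Nᶜ) ∩ {x | t < c x} =
        B ∩ {x | t < (if hAux P (c x) = 0 then c x else 0)} := by
      ext x
      simp only [mem_inter_iff, mem_setOf_eq, mem_compl_iff, hNdef, not_not]
      constructor
      · rintro ⟨⟨hxB, hx⟩, hlt⟩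
        exact ⟨hxB, by rw [if_pos hx]; exact hlt⟩
      · rintro ⟨hxB, hlt⟩
        by_cases hx : hAux P (c x) = 0
        · rw [if_pos hx] at hlt
          exact ⟨⟨hxB, hx⟩, hlt⟩
        · rw [if_neg hx] at hlt
          exact absurd hlt ENNReal.not_lt_zero
    rw [hseteq]
end

section
/- Let ⊙ be a non-degenerate pseudo-multiplication on [0,∞] and let τ be a σ-maxitive measure on a measurable space (E, 𝔅) having the Radon–Nikodym property with respect to the idempotent ⊙-integral. Then τ is semi-⊙-finite: for every measurable B, τ(B) = ⨆{τ(A) : A measurable, A ⊆ B, τ(A) ⊙-finite}. -/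
open scoped ENNReal
open Set

/-- `ν ≪⊙ τ`: `ν(B) ≤ ∞ ⊙ τ(B)` whenever `τ(B)` is `⊙`-finite. -/
def OAbsCont {E : Type*} [MeasurableSpace E] (P : PseudoMul)
    (ν τ : Set E → ℝ≥0∞) : Prop :=
  ∀ B : Set E, MeasurableSet B → P.OFinite (τ B) → ν B ≤ P.op ⊤ (τ B)

/-- `τ` is σ-`⊙`-finite. -/
def SigmaOFinite {E : Type*} [MeasurableSpace E] (P : PseudoMul)
    (τ : Set E → ℝ≥0∞) : Prop :=
  ∃ B : ℕ → Set E, (∀ n, MeasurableSet (B n)) ∧ (⋃ n, B n) = univ ∧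
    ∀ n, P.OFinite (τ (B n))

/-- A σ-ideal of the σ-algebra: a nonempty collection of measurable sets closed
under countable unions and under measurable subsets. -/
def IsSigmaIdeal {E : Type*} [MeasurableSpace E] (I : Set (Set E)) : Prop :=
  I.Nonempty ∧ (∀ A ∈ I, MeasurableSet A) ∧
    (∀ B : ℕ → Set E, (∀ n, B n ∈ I) → (⋃ n, B n) ∈ I) ∧
    (∀ A B : Set E, B ∈ I → A ⊆ B → MeasurableSet A → A ∈ I)

/-- `τ` is σ-principal. -/
def SigmaPrincipal {E : Type*} [MeasurableSpace E] (τ : Set E → ℝ≥0∞) : Prop :=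
  ∀ I : Set (Set E), IsSigmaIdeal I → ∃ L ∈ I, ∀ S ∈ I, τ (S \ L) = 0

/-- `τ` has the Radon–Nikodym property w.r.t. the idempotent `⊙`-integral. -/
def HasRNP {E : Type*} [MeasurableSpace E] (P : PseudoMul)
    (τ : Set E → ℝ≥0∞) : Prop :=
  ∀ ν : Set E → ℝ≥0∞, SigmaMaxitive ν → OAbsCont P ν τ →
    ∃ c : E → ℝ≥0∞, Measurable c ∧
      ∀ B : Set E, MeasurableSet B → ν B = idemInt P τ c B


lemma pm_one_ne_zero (P : PseudoMul) : P.one ≠ 0 := by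
  intro h
  have h1 := P.one_op ⊤
  rw [h, P.zero_op] at h1
  exact ENNReal.top_ne_zero h1.symm

lemma pm_ofinite_zero (P : PseudoMul) : P.OFinite 0 := by
  refine le_antisymm ?_ (zero_le)
  exact iInf₂_le_of_le 1 (by simp) (le_of_eq (P.op_zero 1))

lemma pm_ofinite_mono (P : PseudoMul) {u v : ℝ≥0∞} (huv : u ≤ v) (hv : P.OFinite v) :
    P.OFinite u := by
  have h : ⨅ s ∈ Ioi (0:ℝ≥0∞), P.op s u ≤ ⨅ s ∈ Ioi (0:ℝ≥0∞), P.op s v :=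
    iInf_mono fun s => iInf_mono fun _ => P.mono_right s huv
  exact le_antisymm (h.trans (le_of_eq hv)) (zero_le)

lemma pm_ofinite_of_op (P : PseudoMul) {t u : ℝ≥0∞} (ht : t ≠ 0)
    (h : P.OFinite (P.op t u)) : P.OFinite u := by
  have key : ⨅ r ∈ Ioi (0:ℝ≥0∞), P.op r u ≤ ⨅ s ∈ Ioi (0:ℝ≥0∞), P.op s (P.op t u) := by
    refine le_iInf₂ fun s hs => ?_
    rw [← P.assoc]
    refine iInf₂_le_of_le (P.op s t) ?_ le_rfl
    simp only [mem_Ioi, pos_iff_ne_zero]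
    intro h0
    rcases P.no_zero_divisors s t h0 with h' | h'
    · exact hs.ne' h'
    · exact ht h'
  exact le_antisymm (key.trans (le_of_eq h)) (zero_le)

/-- A σ-maxitive measure with the Radon–Nikodym property is semi-`⊙`-finite. -/
theorem semiOFinite_of_rnp {E : Type*} [MeasurableSpace E]
    (P : PseudoMul) (hP : P.Nondegenerate)
    (τ : Set E → ℝ≥0∞) (hτ : SigmaMaxitive τ) (hRNP : HasRNP P τ) :
    ∀ B : Set E, MeasurableSet B →
      τ B = ⨆ A ∈ {A : Set E | MeasurableSet A ∧ A ⊆ B ∧ P.OFinite (τ A)},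
        τ A := by
  intro B hB
  have hmono : ∀ A C : Set E, MeasurableSet A → MeasurableSet C → A ⊆ C → τ A ≤ τ C := by
    intro A C hA hC hAC
    have hU : (⋃ n : ℕ, if n = 0 then A else C) = C := by
      apply Set.Subset.antisymm
      · refine Set.iUnion_subset fun n => ?_
        split_ifs
        · exact hAC
        · exact subset_rfl
      · intro x hx
        exact Set.mem_iUnion.2 ⟨1, by simpa using hx⟩
    have h := hτ.2 (fun n => if n = 0 then A else C) (fun n => by split_ifs <;> assumption)
    rw [hU] at h
    rw [h]
    exact le_iSup_of_le 0 (by simp)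
  set m := ⨆ A ∈ {A : Set E | MeasurableSet A ∧ A ⊆ B ∧ P.OFinite (τ A)}, τ A with hm
  have hmem : ∀ S : Set E, MeasurableSet S → S ⊆ B → P.OFinite (τ S) → τ S ≤ m := by
    intro S hS hSB hfin
    exact le_iSup₂_of_le S ⟨hS, hSB, hfin⟩ le_rfl
  refine le_antisymm ?_ (iSup₂_le fun A hA => hmono A B hA.1 hB hA.2.1)
  set ν : Set E → ℝ≥0∞ := fun S => if m < τ (S ∩ B) then P.one else 0 with hν
  have hmax : SigmaMaxitive ν := by
    constructor
    · show (if m < τ (∅ ∩ B) then P.one else 0) = 0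
      rw [Set.empty_inter, hτ.1]
      exact if_neg (by simp)
    · intro Bs hBs
      have hU : τ ((⋃ n, Bs n) ∩ B) = ⨆ n, τ (Bs n ∩ B) := by
        rw [Set.iUnion_inter]
        exact hτ.2 _ fun n => (hBs n).inter hB
      show (if m < τ ((⋃ n, Bs n) ∩ B) then P.one else 0) = ⨆ n, ν (Bs n)
      rw [hU]
      by_cases h : m < ⨆ n, τ (Bs n ∩ B)
      · rw [if_pos h]
        obtain ⟨n, hn⟩ := lt_iSup_iff.mp h
        apply le_antisymm
        · refine le_iSup_of_le n ?_
          show P.one ≤ (if m < τ (Bs n ∩ B) then P.one else 0)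
          rw [if_pos hn]
        · refine iSup_le fun k => ?_
          show (if m < τ (Bs k ∩ B) then P.one else 0) ≤ P.one
          split_ifs
          · exact le_rfl
          · exact zero_le
      · rw [if_neg h]
        refine le_antisymm (zero_le) (iSup_le fun n => le_of_eq ?_)
        have hn : ¬ m < τ (Bs n ∩ B) := fun hc => h (hc.trans_le (le_iSup (fun k => τ (Bs k ∩ B)) n))
        exact if_neg hn
  have habs : OAbsCont P ν τ := by
    intro S hS hfin
    have h1 : τ (S ∩ B) ≤ m :=
      hmem _ (hS.inter hB) Set.inter_subset_right
        (pm_ofinite_mono P (hmono _ _ (hS.inter hB) hS Set.inter_subset_left) hfin)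
    show (if m < τ (S ∩ B) then P.one else 0) ≤ _
    rw [if_neg (not_lt.mpr h1)]
    exact zero_le
  obtain ⟨c, hc, hrep⟩ := hRNP ν hmax habs
  have step0 : τ (B ∩ {x | c x = 0}) ≤ m := by
    set S := B ∩ {x | c x = 0} with hS
    have hSm : MeasurableSet S := hB.inter (hc (measurableSet_singleton 0))
    have hempty : ∀ t : ℝ≥0∞, S ∩ {x | t < c x} = ∅ := by
      intro t
      ext x
      simp only [Set.mem_inter_iff, Set.mem_empty_iff_false, iff_false, Set.mem_setOf_eq, hS,
        not_and]
      rintro ⟨_, h0⟩ hlt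
      rw [h0] at hlt
      exact (not_lt.mpr (zero_le : (0:ℝ≥0∞) ≤ t)) hlt
    have hid : idemInt P τ c S = 0 := by
      refine le_antisymm (iSup₂_le fun t _ => ?_) (zero_le)
      rw [hempty t, hτ.1, P.op_zero]
    have hν0 : ν S = 0 := (hrep S hSm).trans hid
    by_contra hcon
    push_neg at hcon
    have hSB : S ∩ B = S := Set.inter_eq_left.mpr Set.inter_subset_left
    have h1 : ν S = P.one := by
      show (if m < τ (S ∩ B) then P.one else 0) = P.one
      rw [hSB]
      exact if_pos hcon
    exact pm_one_ne_zero P (h1.symm.trans hν0)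
  have step1 : ∀ t : ℝ≥0∞, t ≠ 0 → t ≠ ⊤ → τ (B ∩ {x | t < c x}) ≤ m := by
    intro t ht0 htT
    set W := B ∩ {x | t < c x} with hW
    have hWm : MeasurableSet W := hB.inter (hc measurableSet_Ioi)
    have hWW : W ∩ {x | t < c x} = W := Set.inter_eq_left.mpr Set.inter_subset_right
    have hkey : P.op t (τ W) ≤ ν W := by
      rw [hrep W hWm]
      refine le_iSup₂_of_le t (lt_top_iff_ne_top.mpr htT) ?_
      rw [hWW]
    have hνfin : P.OFinite (ν W) := by
      show P.OFinite (if m < τ (W ∩ B) then P.one else 0)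
      split_ifs
      · exact hP
      · exact pm_ofinite_zero P
    have hfin : P.OFinite (τ W) := pm_ofinite_of_op P ht0 (pm_ofinite_mono P hkey hνfin)
    exact hmem W hWm Set.inter_subset_left hfin
  set D : ℕ → Set E := fun n => if n = 0 then B ∩ {x | c x = 0}
    else B ∩ {x | ((n:ℝ≥0∞))⁻¹ < c x} with hD
  have hDm : ∀ n, MeasurableSet (D n) := by
    intro n
    show MeasurableSet (if n = 0 then B ∩ {x | c x = 0} else B ∩ {x | ((n:ℝ≥0∞))⁻¹ < c x})
    split_ifs
    · exact hB.inter (hc (measurableSet_singleton 0))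
    · exact hB.inter (hc measurableSet_Ioi)
  have hDU : (⋃ n, D n) = B := by
    apply Set.Subset.antisymm
    · refine Set.iUnion_subset fun n => ?_
      show (if n = 0 then B ∩ {x | c x = 0} else B ∩ {x | ((n:ℝ≥0∞))⁻¹ < c x}) ⊆ B
      split_ifs
      · exact Set.inter_subset_left
      · exact Set.inter_subset_left
    · intro x hx
      by_cases h0 : c x = 0
      · refine Set.mem_iUnion.2 ⟨0, ?_⟩
        show x ∈ (if (0:ℕ) = 0 then B ∩ {x | c x = 0} else _)
        rw [if_pos rfl]
        exact ⟨hx, h0⟩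
      · obtain ⟨n, hn⟩ := ENNReal.exists_inv_nat_lt h0
        have hn0 : n ≠ 0 := by
          rintro rfl
          simp only [Nat.cast_zero, ENNReal.inv_zero] at hn
          exact not_top_lt hn
        refine Set.mem_iUnion.2 ⟨n, ?_⟩
        show x ∈ (if n = 0 then B ∩ {x | c x = 0} else B ∩ {x | ((n:ℝ≥0∞))⁻¹ < c x})
        rw [if_neg hn0]
        exact ⟨hx, hn⟩
  calc τ B = ⨆ n, τ (D n) := by rw [← hDU]; exact hτ.2 D hDm
    _ ≤ m := by
        refine iSup_le fun n => ?_
        show τ (if n = 0 then B ∩ {x | c x = 0} else B ∩ {x | ((n:ℝ≥0∞))⁻¹ < c x}) ≤ m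
        split_ifs with h
        · exact step0
        · exact step1 _ (ENNReal.inv_ne_zero.mpr (ENNReal.natCast_ne_top n))
            (ENNReal.inv_ne_top.mpr (by exact_mod_cast h))
end
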